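/- Let $A = k[s,x,y]$, $g = xy(x-y)(x+y-sy)$, and $n \geq 4$ an integer. Then $(x,y)^{n+2} \subseteq (x^n, y^n, g)$ as ideals of $A$. -/

import Mathlib

open MvPolynomial

lemma pow_span_pair_le {R : Type*} [CommRing R] (x y : R) (m : ℕ) :
    Ideal.span {x, y} ^ m ≤ Ideal.span ((fun i => x ^ i * y ^ (m - i)) '' Set.Iic m) := by
  induction m with
  | zero =>
    rw [pow_zero, Ideal.one_eq_top, top_le_iff, Ideal.eq_top_iff_one]
    exact Ideal.subset_span ⟨0, by simp, by simp⟩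
  | succ m ih =>
    rw [pow_succ]
    calc Ideal.span {x, y} ^ m * Ideal.span {x, y}
        ≤ Ideal.span ((fun i => x ^ i * y ^ (m - i)) '' Set.Iic m) * Ideal.span {x, y} :=
          Ideal.mul_mono_left ih
      _ ≤ Ideal.span ((fun i => x ^ i * y ^ (m + 1 - i)) '' Set.Iic (m + 1)) := by
          rw [Ideal.span_mul_span]
          apply Ideal.span_le.2
          intro t ht
          simp only [Set.mem_mul, Set.mem_iUnion, Set.mem_singleton_iff, Set.mem_image,
            Set.mem_Iic, exists_prop] at ht
          obtain ⟨u, ⟨i, hi, rfl⟩, v, hv, rfl⟩ := ht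
          rcases hv with rfl | rfl
          · refine Ideal.subset_span ⟨i + 1, by simp; omega, ?_⟩
            have h1 : m + 1 - (i + 1) = m - i := by omega
            simp only [h1]; ring
          · refine Ideal.subset_span ⟨i, by simp; omega, ?_⟩
            have h1 : m + 1 - i = (m - i) + 1 := by omega
            simp only [h1]; ring

theorem stmt1 (k : Type*) [Field k]
    (s x y g : MvPolynomial (Fin 3) k)
    (hs : s = X 0) (hx : x = X 1) (hy : y = X 2)
    (hg : g = x * y * (x - y) * (x + y - s * y))
    (n : ℕ) (hn : 4 ≤ n) :
    (Ideal.span {x, y}) ^ (n + 2) ≤ Ideal.span {x ^ n, y ^ n, g} := by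
  set J := Ideal.span {x ^ n, y ^ n, g} with hJ
  have hxn : x ^ n ∈ J := Ideal.subset_span (by simp)
  have hyn : y ^ n ∈ J := Ideal.subset_span (by simp)
  have hgJ : g ∈ J := Ideal.subset_span (by simp)
  have key : ∀ i, ∀ j, i + j = n + 2 → x ^ i * y ^ j ∈ J := by
    intro i
    induction i using Nat.strong_induction_on with
    | _ i IH =>
      intro j hij
      rcases le_or_gt n i with h | h
      · obtain ⟨c, rfl⟩ := Nat.exists_eq_add_of_le h
        have : x ^ (n + c) * y ^ j = (x ^ c * y ^ j) * x ^ n := by ring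
        rw [this]
        exact J.mul_mem_left _ hxn
      · rcases le_or_gt n j with h2 | h2
        · obtain ⟨c, rfl⟩ := Nat.exists_eq_add_of_le h2
          have : x ^ i * y ^ (n + c) = (x ^ i * y ^ c) * y ^ n := by ring
          rw [this]
          exact J.mul_mem_left _ hyn
        · obtain ⟨a, rfl⟩ : ∃ a, i = a + 3 := ⟨i - 3, by omega⟩
          obtain ⟨b, rfl⟩ : ∃ b, j = b + 1 := ⟨j - 1, by omega⟩
          have hid : x ^ (a + 3) * y ^ (b + 1) =
              x ^ a * y ^ b * g +
                (s * (x ^ (a + 2) * y ^ (b + 2)) - (s - 1) * (x ^ (a + 1) * y ^ (b + 3))) := by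
            rw [hg]; ring
          rw [hid]
          exact J.add_mem (J.mul_mem_left _ hgJ)
            (J.sub_mem (J.mul_mem_left _ (IH (a + 2) (by omega) (b + 2) (by omega)))
              (J.mul_mem_left _ (IH (a + 1) (by omega) (b + 3) (by omega))))
  refine le_trans (pow_span_pair_le x y (n + 2)) (Ideal.span_le.2 ?_)
  rintro t ⟨i, hi, rfl⟩
  simp only [Set.mem_Iic] at hi
  exact key i (n + 2 - i) (by omega)
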